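/- Let 0 < a < b and let f : (a,b) → ℝ be a continuous function such that t ↦ f(t)/t is strictly monotone on (a,b). Then, for every n ≥ 1, the n+1 functions g_k(t) = t^{n−k}·f(t)^k, k = 0, 1, …, n (the restrictions to the graph curve t ↦ (t, f(t)) of the homogeneous polynomials of degree n in two variables), form a Chebyshev system of order n+1 on (a,b); that is, for every tuple of real constants (c₀, c₁, …, c_n) ≠ 0 the function t ↦ ∑_{k=0}^n c_k·t^{n−k}·f(t)^k has at most n zeros in (a,b). -/

import Mathlib

/-- If `f` is continuous on `(a,b)` with `0 < a < b` and `t ↦ f(t)/t` is strictly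
monotone there, then for every `n ≥ 1` the functions `t^(n-k)·f(t)^k`, `k = 0, …, n`
(restrictions to the graph of `f` of the degree-`n` homogeneous polynomials in two
variables), form a Chebyshev system of order `n+1` on `(a,b)`: every nontrivial
linear combination has at most `n` zeros in `(a,b)`. -/
theorem homogeneous_chebyshev_on_graph
    (a b : ℝ) (ha : 0 < a) (hab : a < b) (f : ℝ → ℝ)
    (hf : ContinuousOn f (Set.Ioo a b))
    (hmono : StrictMonoOn (fun t => f t / t) (Set.Ioo a b) ∨
      StrictAntiOn (fun t => f t / t) (Set.Ioo a b))
    (n : ℕ) (hn : 1 ≤ n) :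
    ∀ c : Fin (n + 1) → ℝ, c ≠ 0 →
      {t ∈ Set.Ioo a b |
        ∑ k : Fin (n + 1), c k * t ^ (n - (k : ℕ)) * f t ^ (k : ℕ) = 0}.encard ≤ n := by
  intro c hc
  set r : ℝ → ℝ := fun t => f t / t with hr
  set P : Polynomial ℝ := ∑ k : Fin (n + 1), Polynomial.monomial (k : ℕ) (c k) with hP
  have hPcoeff : ∀ j : Fin (n + 1), P.coeff (j : ℕ) = c j := by
    intro j
    rw [hP, Polynomial.finset_sum_coeff]
    rw [Finset.sum_eq_single j]
    · simp [Polynomial.coeff_monomial]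
    · intro k _ hkj
      rw [Polynomial.coeff_monomial, if_neg]
      exact fun h => hkj (Fin.ext h)
    · simp
  have hPne : P ≠ 0 := by
    intro h
    apply hc
    funext j
    have := hPcoeff j
    rw [h] at this
    simpa using this.symm
  have hdeg : P.natDegree ≤ n := by
    apply Polynomial.natDegree_sum_le_of_forall_le
    intro k _
    exact le_trans (Polynomial.natDegree_monomial_le _) (Nat.lt_succ_iff.mp k.isLt)
  have heval : ∀ x : ℝ, P.eval x = ∑ k : Fin (n + 1), c k * x ^ (k : ℕ) := by
    intro x
    rw [hP, Polynomial.eval_finset_sum]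
    simp [Polynomial.eval_monomial]
  set S := {t ∈ Set.Ioo a b |
    ∑ k : Fin (n + 1), c k * t ^ (n - (k : ℕ)) * f t ^ (k : ℕ) = 0} with hS
  have hinj : Set.InjOn r S := by
    have : Set.InjOn r (Set.Ioo a b) := by
      rcases hmono with h | h
      · exact h.injOn
      · exact h.injOn
    exact this.mono (fun t ht => ht.1)
  have himg : r '' S ⊆ ↑P.roots.toFinset := by
    rintro x ⟨t, ht, rfl⟩
    obtain ⟨htab, hsum⟩ := ht
    have ht0 : t ≠ 0 := ne_of_gt (lt_trans ha htab.1)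
    simp only [Multiset.mem_toFinset, Finset.mem_coe]
    rw [Polynomial.mem_roots hPne]
    have hkey : ∀ k : Fin (n + 1),
        c k * (r t) ^ (k : ℕ) * t ^ n = c k * t ^ (n - (k : ℕ)) * f t ^ (k : ℕ) := by
      intro k
      have hk : (k : ℕ) ≤ n := Nat.lt_succ_iff.mp k.isLt
      have htn : t ^ n = t ^ (n - (k : ℕ)) * t ^ (k : ℕ) := by
        rw [← pow_add, Nat.sub_add_cancel hk]
      rw [hr]
      simp only [div_pow]
      rw [htn]
      field_simp
    have hsum' : (∑ k : Fin (n + 1), c k * (r t) ^ (k : ℕ)) * t ^ n = 0 := by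
      rw [Finset.sum_mul]
      simp_rw [hkey]
      exact hsum
    have htn0 : t ^ n ≠ 0 := pow_ne_zero _ ht0
    have : (∑ k : Fin (n + 1), c k * (r t) ^ (k : ℕ)) = 0 :=
      (mul_eq_zero.mp hsum').resolve_right htn0
    rw [Polynomial.IsRoot, heval]; exact this
  calc S.encard = (r '' S).encard := (hinj.encard_image).symm
    _ ≤ (↑P.roots.toFinset : Set ℝ).encard := Set.encard_mono himg
    _ = (P.roots.toFinset.card : ℕ∞) := Set.encard_coe_eq_coe_finsetCard _
    _ ≤ (Multiset.card P.roots : ℕ∞) := by exact_mod_cast Multiset.toFinset_card_le _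
    _ ≤ (P.natDegree : ℕ∞) := by exact_mod_cast P.card_roots' 
    _ ≤ (n : ℕ∞) := by exact_mod_cast hdeg
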